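/- Let X be a Banach space and δ > 0. Then the norm of X is δ-rough (η(X,u) ≥ δ for all u ∈ S_X) if and only if every nonempty weak*-slice of the unit ball of X* has diameter at least δ. -/

import Mathlib

open Filter Metric

/-- The roughness `η(X, u)` of the norm of `X` at `u`:
`limsup_{‖h‖ → 0} (‖u + h‖ + ‖u - h‖ - 2) / ‖h‖`. -/
noncomputable def roughness {X : Type*} [NormedAddCommGroup X] (u : X) : ℝ :=
  Filter.limsup (fun h : X => (‖u + h‖ + ‖u - h‖ - 2) / ‖h‖) (nhdsWithin 0 {(0 : X)}ᶜ)

/-- The numerator is nonnegative for unit `u`. -/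
lemma rough_num_nonneg {X : Type*} [NormedAddCommGroup X] [NormedSpace ℝ X]
    {u : X} (hu : ‖u‖ = 1) (h : X) : 0 ≤ ‖u + h‖ + ‖u - h‖ - 2 := by
  have h2 : u + h + (u - h) = (2 : ℝ) • u := by
    rw [two_smul]; abel
  have : ‖(2 : ℝ) • u‖ ≤ ‖u + h‖ + ‖u - h‖ := h2 ▸ norm_add_le _ _
  rw [norm_smul, hu] at this
  simp only [Real.norm_ofNat, mul_one] at this
  linarith

/-- The quotient is bounded above by 2. -/
lemma rough_quot_le_two {X : Type*} [NormedAddCommGroup X] [NormedSpace ℝ X]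
    {u : X} (hu : ‖u‖ = 1) (h : X) : (‖u + h‖ + ‖u - h‖ - 2) / ‖h‖ ≤ 2 := by
  rcases eq_or_ne h 0 with rfl | hh
  · simp [hu]
  · have hpos : 0 < ‖h‖ := norm_pos_iff.mpr hh
    rw [div_le_iff₀ hpos]
    have h1 : ‖u + h‖ ≤ 1 + ‖h‖ := by simpa [hu] using norm_add_le u h
    have h2 : ‖u - h‖ ≤ 1 + ‖h‖ := by simpa [hu] using norm_sub_le u h
    linarith

lemma rough_bddAbove {X : Type*} [NormedAddCommGroup X] [NormedSpace ℝ X]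
    {u : X} (hu : ‖u‖ = 1) :
    IsBoundedUnder (· ≤ ·) (nhdsWithin 0 {(0 : X)}ᶜ)
      (fun h : X => (‖u + h‖ + ‖u - h‖ - 2) / ‖h‖) :=
  Filter.isBoundedUnder_of ⟨2, fun h => rough_quot_le_two hu h⟩

lemma norm_add_lb {X : Type*} [NormedAddCommGroup X] {x : X} (hx : ‖x‖ = 1) (h : X) :
    1 - ‖h‖ ≤ ‖x + h‖ := by
  have h1 := norm_sub_norm_le x (-h)
  rw [sub_neg_eq_add, norm_neg, hx] at h1
  linarith

lemma norm_sub_lb {X : Type*} [NormedAddCommGroup X] {x : X} (hx : ‖x‖ = 1) (h : X) :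
    1 - ‖h‖ ≤ ‖x - h‖ := by
  have h1 := norm_sub_norm_le x h
  rw [hx] at h1
  linarith

set_option maxHeartbeats 1000000 in
theorem stmt7 {X : Type*} [NormedAddCommGroup X] [NormedSpace ℝ X] [CompleteSpace X]
    (δ : ℝ) (hδ : 0 < δ) :
    (∀ u : X, ‖u‖ = 1 → δ ≤ roughness u) ↔
      (∀ x : X, ‖x‖ = 1 → ∀ α : ℝ, 0 < α → α < 1 →
        ({f : X →L[ℝ] ℝ | ‖f‖ ≤ 1 ∧ f x > 1 - α}.Nonempty →
          δ ≤ Metric.diam {f : X →L[ℝ] ℝ | ‖f‖ ≤ 1 ∧ f x > 1 - α})) := by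
  constructor
  · -- rough norm implies slices have diameter ≥ δ
    intro hr x hx α hα0 hα1 _hne
    have hx0 : x ≠ 0 := by
      intro h; rw [h, norm_zero] at hx; norm_num at hx
    have hnt : Nontrivial X := ⟨x, 0, hx0⟩
    have hNB : NeBot (nhdsWithin (0 : X) {(0 : X)}ᶜ) := Module.punctured_nhds_neBot ℝ X 0
    have hbdd := rough_bddAbove (u := x) hx
    have hcb : IsCoboundedUnder (· ≤ ·) (nhdsWithin (0 : X) {(0 : X)}ᶜ)
        (fun h : X => (‖x + h‖ + ‖x - h‖ - 2) / ‖h‖) :=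
      isCoboundedUnder_le_of_eventually_le _ (Filter.Eventually.of_forall fun h =>
        div_nonneg (rough_num_nonneg hx h) (norm_nonneg h))
    -- bounded slice
    have hBnd : Bornology.IsBounded {f : X →L[ℝ] ℝ | ‖f‖ ≤ 1 ∧ f x > 1 - α} := by
      apply (Metric.isBounded_closedBall (x := (0 : X →L[ℝ] ℝ)) (r := 1)).subset
      intro f hf
      simpa [Metric.mem_closedBall, dist_zero_right] using hf.1
    apply le_of_forall_sub_le
    intro ε hε
    have hlt : δ - ε < Filter.limsup (fun h : X => (‖x + h‖ + ‖x - h‖ - 2) / ‖h‖)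
        (nhdsWithin 0 {(0 : X)}ᶜ) := lt_of_lt_of_le (by linarith) (hr x hx)
    have hfreq := Filter.frequently_lt_of_lt_limsup hcb hlt
    set r : ℝ := min (α / 2) (2⁻¹) with hr_def
    have hrpos : 0 < r := lt_min (by linarith) (by norm_num)
    have hev : ∀ᶠ h in nhdsWithin (0 : X) {(0 : X)}ᶜ, ‖h‖ < r ∧ h ≠ 0 := by
      have h1 : ∀ᶠ h in nhdsWithin (0 : X) {(0 : X)}ᶜ, ‖h‖ < r := by
        apply Filter.Eventually.filter_mono nhdsWithin_le_nhds
        have : Metric.ball (0 : X) r ∈ nhds (0 : X) := Metric.ball_mem_nhds _ hrpos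
        filter_upwards [this] with h hh
        simpa [Metric.mem_ball, dist_zero_right] using hh
      have h2 : ∀ᶠ h in nhdsWithin (0 : X) {(0 : X)}ᶜ, h ≠ 0 := eventually_mem_nhdsWithin
      exact h1.and h2
    obtain ⟨h, hq, hhr, hh0⟩ := (hfreq.and_eventually hev).exists
    have hnpos : 0 < ‖h‖ := norm_pos_iff.mpr hh0
    have hhalf : ‖h‖ < 2⁻¹ := lt_of_lt_of_le hhr (min_le_right _ _)
    have hhα : ‖h‖ < α / 2 := lt_of_lt_of_le hhr (min_le_left _ _)
    have hxp : x + h ≠ 0 := by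
      intro hc
      have : ‖x + h‖ = 0 := by rw [hc, norm_zero]
      have h1 : (1 : ℝ) - ‖h‖ ≤ ‖x + h‖ := norm_add_lb hx h
      rw [this] at h1; linarith
    have hxm : x - h ≠ 0 := by
      intro hc
      have : ‖x - h‖ = 0 := by rw [hc, norm_zero]
      have h1 : (1 : ℝ) - ‖h‖ ≤ ‖x - h‖ := norm_sub_lb hx h
      rw [this] at h1; linarith
    obtain ⟨f, hfn, hfx⟩ := exists_dual_vector ℝ (x + h) (norm_ne_zero_iff.mpr hxp)
    obtain ⟨g, hgn, hgx⟩ := exists_dual_vector ℝ (x - h) (norm_ne_zero_iff.mpr hxm)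
    have hfh : |f h| ≤ ‖h‖ := by
      have := f.le_opNorm h
      rwa [hfn, one_mul, Real.norm_eq_abs] at this
    have hgh : |g h| ≤ ‖h‖ := by
      have := g.le_opNorm h
      rwa [hgn, one_mul, Real.norm_eq_abs] at this
    have hfxh : f (x + h) = ‖x + h‖ := by exact_mod_cast hfx
    have hgxh : g (x - h) = ‖x - h‖ := by exact_mod_cast hgx
    have hfsplit : f (x + h) = f x + f h := by rw [map_add]
    have hgsplit : g (x - h) = g x - g h := by rw [map_sub]
    have hfx1 : f x ≤ 1 := by
      have := f.le_opNorm x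
      rw [hfn, one_mul, hx, Real.norm_eq_abs] at this
      exact le_trans (le_abs_self _) this
    have hgx1 : g x ≤ 1 := by
      have := g.le_opNorm x
      rw [hgn, one_mul, hx, Real.norm_eq_abs] at this
      exact le_trans (le_abs_self _) this
    have hxplb : (1 : ℝ) - ‖h‖ ≤ ‖x + h‖ := norm_add_lb hx h
    have hxmlb : (1 : ℝ) - ‖h‖ ≤ ‖x - h‖ := norm_sub_lb hx h
    -- f and g are in the slice
    have hfS : f ∈ {f : X →L[ℝ] ℝ | ‖f‖ ≤ 1 ∧ f x > 1 - α} := by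
      refine ⟨le_of_eq hfn, ?_⟩
      have : f x = ‖x + h‖ - f h := by rw [← hfxh, hfsplit]; ring
      rw [this]
      have : (1 : ℝ) - 2 * ‖h‖ ≤ ‖x + h‖ - f h := by
        have := (abs_le.mp hfh).2
        linarith
      linarith
    have hgS : g ∈ {f : X →L[ℝ] ℝ | ‖f‖ ≤ 1 ∧ f x > 1 - α} := by
      refine ⟨le_of_eq hgn, ?_⟩
      have : g x = ‖x - h‖ + g h := by rw [← hgxh, hgsplit]; ring
      rw [this]
      have : (1 : ℝ) - 2 * ‖h‖ ≤ ‖x - h‖ + g h := by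
        have := (abs_le.mp hgh).1
        linarith
      linarith
    -- the numerator bound
    have hnum : (δ - ε) * ‖h‖ < ‖x + h‖ + ‖x - h‖ - 2 :=
      (lt_div_iff₀ hnpos).mp hq
    have hdiff : (δ - ε) * ‖h‖ < (f - g) h := by
      have hfg : (f - g) h = f h - g h := by simp
      have hfh' : f h = ‖x + h‖ - f x := by rw [← hfxh, hfsplit]; ring
      have hgh' : g h = g x - ‖x - h‖ := by rw [← hgxh] at *; rw [hgsplit]; ring
      rw [hfg, hfh', hgh']
      linarith
    have hfgnorm : δ - ε < ‖f - g‖ := by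
      have h1 : (f - g) h ≤ ‖f - g‖ * ‖h‖ := by
        have := (f - g).le_opNorm h
        rw [Real.norm_eq_abs] at this
        exact le_trans (le_abs_self _) this
      have h2 : (δ - ε) * ‖h‖ < ‖f - g‖ * ‖h‖ := lt_of_lt_of_le hdiff h1
      exact lt_of_mul_lt_mul_right h2 (le_of_lt hnpos)
    calc δ - ε ≤ ‖f - g‖ := le_of_lt hfgnorm
      _ = dist f g := (dist_eq_norm f g).symm
      _ ≤ Metric.diam {f : X →L[ℝ] ℝ | ‖f‖ ≤ 1 ∧ f x > 1 - α} :=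
          Metric.dist_le_diam_of_mem hBnd hfS hgS
  · -- slices of diameter ≥ δ imply rough norm
    intro hs u hu
    have hu0 : u ≠ 0 := by
      intro h; rw [h, norm_zero] at hu; norm_num at hu
    have hnt : Nontrivial X := ⟨u, 0, hu0⟩
    rw [roughness]
    apply le_of_forall_sub_le
    intro ε hε
    refine Filter.le_limsup_of_frequently_le ?_ (rough_bddAbove hu)
    rw [Filter.frequently_iff]
    intro U hU
    rw [Metric.mem_nhdsWithin_iff] at hU
    obtain ⟨r, hrpos, hrU⟩ := hU
    rcases le_or_gt (δ - ε) 0 with hneg | hpos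
    · -- trivial case: any small nonzero h works
      have hNB : NeBot (nhdsWithin (0 : X) {(0 : X)}ᶜ) := Module.punctured_nhds_neBot ℝ X 0
      have hmem : Metric.ball (0 : X) r ∩ {(0 : X)}ᶜ ∈ nhdsWithin (0 : X) {(0 : X)}ᶜ :=
        inter_mem (nhdsWithin_le_nhds (Metric.ball_mem_nhds _ hrpos)) self_mem_nhdsWithin
      obtain ⟨h, hh⟩ := Filter.nonempty_of_mem hmem
      refine ⟨h, hrU hh, ?_⟩
      exact le_trans hneg (div_nonneg (rough_num_nonneg hu h) (norm_nonneg h))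
    · -- main case
      set t : ℝ := r / 2 with ht_def
      have htpos : 0 < t := by positivity
      set α : ℝ := min (t * ε / 8) 2⁻¹ with hα_def
      have hαpos : 0 < α := lt_min (by positivity) (by norm_num)
      have hα1 : α < 1 := lt_of_le_of_lt (min_le_right _ _) (by norm_num)
      have hαle : α ≤ t * ε / 8 := min_le_left _ _
      -- the slice is nonempty
      obtain ⟨f₀, hf₀n, hf₀x⟩ := exists_dual_vector ℝ u (norm_ne_zero_iff.mpr hu0)
      have hne : ({f : X →L[ℝ] ℝ | ‖f‖ ≤ 1 ∧ f u > 1 - α}).Nonempty := by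
        refine ⟨f₀, le_of_eq hf₀n, ?_⟩
        have : f₀ u = 1 := by rw [show f₀ u = ‖u‖ from by exact_mod_cast hf₀x, hu]
        rw [this]; linarith
      have hdiam := hs u hu α hαpos hα1 hne
      -- find two points in the slice far apart
      have hexists : ∃ f ∈ {f : X →L[ℝ] ℝ | ‖f‖ ≤ 1 ∧ f u > 1 - α},
          ∃ g ∈ {f : X →L[ℝ] ℝ | ‖f‖ ≤ 1 ∧ f u > 1 - α}, δ - ε / 2 < dist f g := by
        by_contra hcon
        push_neg at hcon
        have : Metric.diam {f : X →L[ℝ] ℝ | ‖f‖ ≤ 1 ∧ f u > 1 - α} ≤ δ - ε / 2 :=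
          Metric.diam_le_of_forall_dist_le (by linarith) hcon
        linarith
      obtain ⟨f, hfS, g, hgS, hfg⟩ := hexists
      have hbn : δ - ε / 2 < ‖f - g‖ := by rwa [dist_eq_norm] at hfg
      obtain ⟨z, hz1, hz2⟩ := (f - g).exists_lt_apply_of_lt_opNorm hbn
      rw [Real.norm_eq_abs] at hz2
      -- fix the sign
      obtain ⟨w, hw1, hw2⟩ : ∃ w : X, ‖w‖ < 1 ∧ δ - ε / 2 < (f - g) w := by
        rcases le_or_gt 0 ((f - g) z) with hcz | hcz
        · exact ⟨z, hz1, by rwa [abs_of_nonneg hcz] at hz2⟩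
        · refine ⟨-z, by rwa [norm_neg], ?_⟩
          rw [map_neg]
          rwa [abs_of_neg hcz] at hz2
      have hw0 : w ≠ 0 := by
        intro hc
        rw [hc, map_zero] at hw2
        linarith
      set h : X := t • w with hh_def
      have hh0 : h ≠ 0 := smul_ne_zero (ne_of_gt htpos) hw0
      have hhn : ‖h‖ = t * ‖w‖ := by
        rw [hh_def, norm_smul, Real.norm_eq_abs, abs_of_pos htpos]
      have hhpos : 0 < ‖h‖ := norm_pos_iff.mpr hh0
      have hhle : ‖h‖ ≤ t := by
        rw [hhn]
        nlinarith [norm_nonneg w]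
      have hhr : ‖h‖ < r := lt_of_le_of_lt hhle (by rw [ht_def]; linarith)
      refine ⟨h, hrU ⟨by simpa [Metric.mem_ball, dist_zero_right] using hhr, hh0⟩, ?_⟩
      -- the estimate
      have hfub : f (u + h) ≤ ‖u + h‖ := by
        have h1 := f.le_opNorm (u + h)
        rw [Real.norm_eq_abs] at h1
        have h2 : ‖f‖ * ‖u + h‖ ≤ ‖u + h‖ := by nlinarith [hfS.1, norm_nonneg (u + h)]
        exact le_trans (le_abs_self _) (le_trans h1 h2)
      have hgub : g (u - h) ≤ ‖u - h‖ := by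
        have h1 := g.le_opNorm (u - h)
        rw [Real.norm_eq_abs] at h1
        have h2 : ‖g‖ * ‖u - h‖ ≤ ‖u - h‖ := by nlinarith [hgS.1, norm_nonneg (u - h)]
        exact le_trans (le_abs_self _) (le_trans h1 h2)
      have hsum : f (u + h) + g (u - h) = f u + g u + t * ((f - g) w) := by
        rw [hh_def, map_add, map_sub, map_smul, map_smul]
        simp only [ContinuousLinearMap.sub_apply, smul_eq_mul]
        ring
      have hnum : t * (δ - 3 * ε / 4) ≤ ‖u + h‖ + ‖u - h‖ - 2 := by
        have h1 : (1 - α) + (1 - α) + t * (δ - ε / 2) < f u + g u + t * ((f - g) w) := by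
          have hf2 := hfS.2
          have hg2 := hgS.2
          nlinarith [htpos]
        have h2 : f u + g u + t * ((f - g) w) ≤ ‖u + h‖ + ‖u - h‖ := by
          rw [← hsum]; linarith
        nlinarith [htpos, hαle]
      have hnn : 0 ≤ t * (δ - 3 * ε / 4) := by nlinarith [htpos]
      have step1 : t * (δ - 3 * ε / 4) / ‖h‖ ≤ (‖u + h‖ + ‖u - h‖ - 2) / ‖h‖ :=
        div_le_div_of_nonneg_right hnum (le_of_lt hhpos)
      have step2 : t * (δ - 3 * ε / 4) / t ≤ t * (δ - 3 * ε / 4) / ‖h‖ :=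
        div_le_div_of_nonneg_left hnn hhpos hhle
      have step3 : t * (δ - 3 * ε / 4) / t = δ - 3 * ε / 4 := by
        field_simp
      linarith
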